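/- arXiv:1102.0334 — 3 statements merged into one kernel-verified Lean document; each statement's English description precedes it below -/
import Mathlib

section
/- For a group G, the category of abelian group objects in the slice category Grp/G is equivalent to the category of (left) ℤ[G]-modules. The equivalence sends a G-module M to the split extension (semidirect product projection) M ⋊ G → G, and an abelian group object p : E → G to the kernel of p with the conjugation G-action. -/
open CategoryTheory

universe u

/-- An abelian group object in the slice category `Grp/G`: a group homomorphism
`p : E →* G` together with a unit section `zero`, a fiberwise addition `add` defined on the
fiber product `E ×_G E` (i.e. on pairs with `p x = p y`), and fiberwise negation `neg`, all
morphisms over `G`, satisfying the abelian group axioms.  This is Beck's notion of a module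
over `G`. -/
structure BeckModule (G : Type u) [Group G] : Type (u + 1) where
  E : Type u
  [grp : Group E]
  p : E →* G
  zero : G →* E
  neg : E →* E
  add : ∀ x y : E, p x = p y → E
  p_zero : ∀ g, p (zero g) = g
  p_neg : ∀ x, p (neg x) = p x
  p_add : ∀ x y h, p (add x y h) = p x
  /-- `add` is a group homomorphism on the fiber product. -/
  add_mul : ∀ x y x' y' (h : p x = p y) (h' : p x' = p y') (h'' : p (x * x') = p (y * y')),
    add (x * x') (y * y') h'' = add x y h * add x' y' h'
  zero_add : ∀ x (h : p (zero (p x)) = p x), add (zero (p x)) x h = x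
  add_assoc : ∀ x y z (hxy : p x = p y) (hyz : p y = p z) (h1 : p (add x y hxy) = p z)
    (h2 : p x = p (add y z hyz)), add (add x y hxy) z h1 = add x (add y z hyz) h2
  add_comm : ∀ x y (h : p x = p y) (h' : p y = p x), add x y h = add y x h'
  add_neg : ∀ x (h : p x = p (neg x)), add x (neg x) h = zero (p x)

attribute [instance] BeckModule.grp

variable {G : Type u} [Group G]

/-- Morphisms of abelian group objects in `Grp/G`: group homomorphisms over `G`
commuting with the fiberwise addition. -/
@[ext]
structure BeckModule.Hom (X Y : BeckModule G) where
  toHom : X.E →* Y.E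
  p_comm : ∀ x, Y.p (toHom x) = X.p x
  map_add : ∀ x y (h : X.p x = X.p y) (h' : Y.p (toHom x) = Y.p (toHom y)),
    toHom (X.add x y h) = Y.add (toHom x) (toHom y) h'

instance : Category (BeckModule G) where
  Hom X Y := BeckModule.Hom X Y
  id X := ⟨MonoidHom.id _, fun _ => rfl, fun _ _ _ _ => rfl⟩
  comp {X Y Z} f g := ⟨g.toHom.comp f.toHom,
    fun x => by simp [g.p_comm, f.p_comm],
    fun x y h h' => by
      simp only [MonoidHom.coe_comp, Function.comp_apply]
      rw [f.map_add x y h (by rw [f.p_comm, f.p_comm]; exact h), g.map_add]⟩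
  id_comp f := BeckModule.Hom.ext rfl
  comp_id f := BeckModule.Hom.ext rfl
  assoc f g h := BeckModule.Hom.ext rfl

namespace BeckModule
variable (X : BeckModule G)

lemma add_congr {x x' y y' : X.E} (hx : x = x') (hy : y = y')
    (h : X.p x = X.p y) (h' : X.p x' = X.p y') : X.add x y h = X.add x' y' h' := by
  subst hx; subst hy; rfl

lemma zero_one : X.zero 1 = 1 := map_one _

lemma p_one : X.p 1 = 1 := map_one _

lemma add_zero_zero (g : G) (h : X.p (X.zero g) = X.p (X.zero g)) :
    X.add (X.zero g) (X.zero g) h = X.zero g := by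
  exact (add_congr X (by rw [X.p_zero]) rfl _ _).trans (X.zero_add (X.zero g) (by rw [X.p_zero]))

lemma add_one_left {x : X.E} (hx : X.p x = 1) (h : X.p (1 : X.E) = X.p x) :
    X.add 1 x h = x := by
  exact (add_congr X (by rw [hx, zero_one]) rfl _ _).trans (X.zero_add x (by rw [X.p_zero]))

lemma add_one_right {x : X.E} (hx : X.p x = 1) (h : X.p x = X.p (1 : X.E)) :
    X.add x 1 h = x := by
  rw [X.add_comm x 1 h h.symm, add_one_left X hx]

lemma add_ker {k k' : X.E} (hk : X.p k = 1) (hk' : X.p k' = 1)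
    (h : X.p k = X.p k') : X.add k k' h = k * k' := by
  have h1 : X.p k = X.p (1 : X.E) := by rw [hk, p_one]
  have h2 : X.p (1 : X.E) = X.p k' := by rw [hk', p_one]
  have := X.add_mul k 1 1 k' h1 h2 (by simp [map_mul, hk, hk', p_one])
  calc X.add k k' h = X.add (k * 1) (1 * k') (by simpa using h) :=
        add_congr X (by simp) (by simp) _ _
    _ = X.add k 1 h1 * X.add 1 k' h2 := this
    _ = k * k' := by rw [add_one_right X hk, add_one_left X hk']

/-- Every `x` decomposes as `(x * zero (p x)⁻¹) * zero (p x)`, and addition is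
multiplication of the kernel parts. -/
lemma add_eq {x y : X.E} (h : X.p x = X.p y) :
    X.add x y h = x * (X.zero (X.p x))⁻¹ * (y * (X.zero (X.p x))⁻¹) * X.zero (X.p x) := by
  set z := X.zero (X.p x) with hz
  have hk : X.p (x * z⁻¹) = 1 := by simp [hz, X.p_zero]
  have hk' : X.p (y * z⁻¹) = 1 := by simp [hz, X.p_zero, ← h]
  have hzz : X.p z = X.p z := rfl
  have h1 : X.p (x * z⁻¹) = X.p (y * z⁻¹) := by rw [hk, hk']
  have := X.add_mul (x * z⁻¹) (y * z⁻¹) z z h1 hzz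
    (by rw [inv_mul_cancel_right, inv_mul_cancel_right]; exact h)
  calc X.add x y h = X.add (x * z⁻¹ * z) (y * z⁻¹ * z) (by simpa using h) :=
        add_congr X (by group) (by group) _ _
    _ = X.add (x * z⁻¹) (y * z⁻¹) h1 * X.add z z hzz := this
    _ = (x * z⁻¹) * (y * z⁻¹) * z := by
        rw [add_ker X hk hk' h1, add_zero_zero]

lemma ker_comm {k k' : X.E} (hk : X.p k = 1) (hk' : X.p k' = 1) : k * k' = k' * k := by
  have h : X.p k = X.p k' := by rw [hk, hk']
  rw [← add_ker X hk hk' h, ← add_ker X hk' hk h.symm, X.add_comm]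

end BeckModule
namespace BeckModule

instance (X : BeckModule G) : CommGroup (MonoidHom.ker X.p) :=
  { (inferInstance : Group (MonoidHom.ker X.p)) with
    mul_comm := fun k k' => Subtype.ext (ker_comm X k.2 k'.2) }

lemma zero_conj_mem (X : BeckModule G) (g : G) {k : X.E} (hk : X.p k = 1) :
    X.zero g * k * (X.zero g)⁻¹ ∈ MonoidHom.ker X.p := by
  simp [MonoidHom.mem_ker, X.p_zero, hk]

/-- Conjugation action of `G` on the kernel. -/
def conjHom (X : BeckModule G) (g : G) : MonoidHom.ker X.p →* MonoidHom.ker X.p where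
  toFun k := ⟨X.zero g * k * (X.zero g)⁻¹, zero_conj_mem X g k.2⟩
  map_one' := by ext; simp
  map_mul' k k' := by ext; push_cast; group

/-- `G`-representation on the (additivized) kernel. -/
def rho (X : BeckModule G) : G →* AddMonoid.End (Additive (MonoidHom.ker X.p)) where
  toFun g := MonoidHom.toAdditive (conjHom X g)
  map_one' := by
    refine AddMonoidHom.ext fun k => ?_
    show Additive.ofMul ((conjHom X 1) k.toMul) = k
    refine congrArg Additive.ofMul (Subtype.ext ?_)
    simp only [conjHom, MonoidHom.coe_mk, OneHom.coe_mk, zero_one, inv_one, mul_one, one_mul]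
    rfl
  map_mul' g g' := by
    refine AddMonoidHom.ext fun k => ?_
    show Additive.ofMul ((conjHom X (g * g')) k.toMul) =
      Additive.ofMul ((conjHom X g) ((conjHom X g') k.toMul))
    refine congrArg Additive.ofMul (Subtype.ext ?_)
    simp only [conjHom, MonoidHom.coe_mk, OneHom.coe_mk]
    push_cast
    rw [map_mul]
    group

noncomputable instance kerModule (X : BeckModule G) :
    Module (MonoidAlgebra ℤ G) (Additive (MonoidHom.ker X.p)) :=
  Module.compHom _
    ((MonoidAlgebra.lift ℤ (AddMonoid.End (Additive (MonoidHom.ker X.p))) G (rho X)) :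
      MonoidAlgebra ℤ G →ₐ[ℤ] _).toRingHom

lemma single_smul (X : BeckModule G) (g : G) (m : Additive (MonoidHom.ker X.p)) :
    (MonoidAlgebra.single g (1 : ℤ)) • m = rho X g m := by
  show ((MonoidAlgebra.lift ℤ (AddMonoid.End (Additive (MonoidHom.ker X.p))) G (rho X))
      (MonoidAlgebra.single g 1)) m = rho X g m
  rw [MonoidAlgebra.lift_single, one_smul]

end BeckModule
namespace BeckModule

lemma eq_zero_of_add_self (X : BeckModule G) (a : X.E) (h : X.p a = X.p a)
    (ha : X.add a a h = a) : a = X.zero (X.p a) := by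
  have := add_eq X h
  rw [ha] at this
  set z := X.zero (X.p a) with hz
  have : a = a * z⁻¹ * (a * z⁻¹) * z := this
  have h2 : a * z⁻¹ = a * z⁻¹ * (a * z⁻¹) := by
    have := congrArg (· * z⁻¹) this
    simpa [mul_assoc] using this
  have h3 : (1 : X.E) = a * z⁻¹ := by
    have := congrArg ((a * z⁻¹)⁻¹ * ·) h2
    simpa [mul_assoc] using this
  exact mul_inv_eq_one.mp h3.symm

lemma hom_zero {X Y : BeckModule G} (f : X.Hom Y) (g : G) :
    f.toHom (X.zero g) = Y.zero g := by
  have hpa : Y.p (f.toHom (X.zero g)) = g := by rw [f.p_comm, X.p_zero]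
  have hidem : Y.add (f.toHom (X.zero g)) (f.toHom (X.zero g)) rfl = f.toHom (X.zero g) := by
    rw [← f.map_add (X.zero g) (X.zero g) rfl rfl, add_zero_zero]
  have := eq_zero_of_add_self Y _ rfl hidem
  rw [this, hpa]

end BeckModule
namespace BeckModule

/-- A `ℤ`-additive map commuting with the `G`-action is `ℤ[G]`-linear. -/
lemma linear_of_equivariant {M N : Type u} [AddCommGroup M] [AddCommGroup N]
    [Module (MonoidAlgebra ℤ G) M] [Module (MonoidAlgebra ℤ G) N] (f : M →+ N)
    (hf : ∀ (g : G) (m : M),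
      f ((MonoidAlgebra.single g (1 : ℤ)) • m) = (MonoidAlgebra.single g (1 : ℤ)) • f m)
    (a : MonoidAlgebra ℤ G) (m : M) : f (a • m) = a • f m := by
  induction a using MonoidAlgebra.induction_on with
  | of g => simpa [MonoidAlgebra.of_apply] using hf g m
  | add a b ha hb => rw [add_smul, add_smul, map_add, ha, hb]
  | smul r a ha => rw [smul_assoc, smul_assoc, map_zsmul, ha]

/-- Restriction of a morphism to kernels. -/
def kerHom {X Y : BeckModule G} (f : X.Hom Y) : MonoidHom.ker X.p →* MonoidHom.ker Y.p where
  toFun k := ⟨f.toHom k, by rw [MonoidHom.mem_ker, f.p_comm]; exact k.2⟩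
  map_one' := by ext; simp
  map_mul' k k' := by ext; simp

lemma kerHom_equivariant {X Y : BeckModule G} (f : X.Hom Y) (g : G)
    (m : Additive (MonoidHom.ker X.p)) :
    MonoidHom.toAdditive (kerHom f) ((MonoidAlgebra.single g (1 : ℤ)) • m) =
      (MonoidAlgebra.single g (1 : ℤ)) • MonoidHom.toAdditive (kerHom f) m := by
  rw [single_smul, single_smul]
  refine congrArg Additive.ofMul (Subtype.ext ?_)
  show f.toHom (X.zero g * (m.toMul : X.E) * (X.zero g)⁻¹) =
    Y.zero g * (f.toHom (m.toMul : X.E)) * (Y.zero g)⁻¹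
  rw [map_mul, map_mul, map_inv, hom_zero f]

/-- The forward functor: kernel with conjugation action. -/
noncomputable def kerFunctor : BeckModule G ⥤ ModuleCat (MonoidAlgebra ℤ G) where
  obj X := ModuleCat.of _ (Additive (MonoidHom.ker X.p))
  map {X Y} f :=
    ModuleCat.ofHom
    { toFun := MonoidHom.toAdditive (kerHom f)
      map_add' := map_add _
      map_smul' := fun a m =>
        linear_of_equivariant (MonoidHom.toAdditive (kerHom f)) (kerHom_equivariant f) a m }
  map_id X := by
    refine ModuleCat.hom_ext (LinearMap.ext fun k => ?_)
    rfl
  map_comp f g := by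
    refine ModuleCat.hom_ext (LinearMap.ext fun k => ?_)
    rfl

end BeckModule
namespace BeckModule

section Sdp
variable (M : Type u) [AddCommGroup M] [Module (MonoidAlgebra ℤ G) M]

/-- Action of `g : G` on a `ℤ[G]`-module as an additive automorphism. -/
noncomputable def actEquiv (g : G) : M ≃+ M where
  toFun m := (MonoidAlgebra.single g (1 : ℤ)) • m
  invFun m := (MonoidAlgebra.single g⁻¹ (1 : ℤ)) • m
  left_inv m := by
    show (MonoidAlgebra.single g⁻¹ (1 : ℤ)) • (MonoidAlgebra.single g (1 : ℤ)) • m = m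
    rw [← mul_smul, MonoidAlgebra.single_mul_single, inv_mul_cancel, one_mul,
      ← MonoidAlgebra.one_def, one_smul]
  right_inv m := by
    show (MonoidAlgebra.single g (1 : ℤ)) • (MonoidAlgebra.single g⁻¹ (1 : ℤ)) • m = m
    rw [← mul_smul, MonoidAlgebra.single_mul_single, mul_inv_cancel, one_mul,
      ← MonoidAlgebra.one_def, one_smul]
  map_add' := smul_add _

/-- The group action on `Multiplicative M`. -/
noncomputable def phiAut : G →* MulAut (Multiplicative M) where
  toFun g := AddEquiv.toMultiplicative (actEquiv M g)
  map_one' := MulEquiv.ext fun m => congrArg Multiplicative.ofAdd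
    (show (MonoidAlgebra.single (1 : G) (1 : ℤ)) • m.toAdd = m.toAdd by
      rw [← MonoidAlgebra.one_def, one_smul])
  map_mul' g g' := MulEquiv.ext fun m => congrArg Multiplicative.ofAdd
    (show (MonoidAlgebra.single (g * g') (1 : ℤ)) • m.toAdd =
        (MonoidAlgebra.single g (1 : ℤ)) • ((MonoidAlgebra.single g' (1 : ℤ)) • m.toAdd) by
      rw [← mul_smul, MonoidAlgebra.single_mul_single, one_mul])

lemma phiAut_apply (g : G) (m : Multiplicative M) :
    phiAut M g m = Multiplicative.ofAdd ((MonoidAlgebra.single g (1 : ℤ)) • m.toAdd) := rfl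

/-- The split extension `M ⋊ G → G` as a Beck module. -/
noncomputable def sdpObj : BeckModule G where
  E := Multiplicative M ⋊[phiAut M] G
  p := SemidirectProduct.rightHom
  zero := SemidirectProduct.inr
  neg :=
    { toFun := fun x => ⟨x.left⁻¹, x.right⟩
      map_one' := by ext <;> simp
      map_mul' := fun a b => by ext <;> simp [mul_inv, map_inv, mul_comm] }
  add x y _ := ⟨x.left * y.left, x.right⟩
  p_zero g := by simp
  p_neg x := rfl
  p_add x y h := rfl
  add_mul x y x' y' h h' h'' := by
    have hr : y.right = x.right := h.symm
    ext
    · show (x * x').left * (y * y').left =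
        (x.left * y.left) * phiAut M x.right (x'.left * y'.left)
      simp only [SemidirectProduct.mul_left, hr, map_mul]
      exact mul_mul_mul_comm _ _ _ _
    · show (x * x').right = x.right * x'.right
      rfl
  zero_add x h := by
    ext
    · show (SemidirectProduct.inr (φ := phiAut M) (SemidirectProduct.rightHom x)).left * x.left = x.left
      simp
    · show (SemidirectProduct.inr (φ := phiAut M) (SemidirectProduct.rightHom x)).right = x.right
      simp
  add_assoc x y z hxy hyz h1 h2 := by
    ext
    · exact congrArg Multiplicative.toAdd (mul_assoc x.left y.left z.left)
    · rfl
  add_comm x y h h' := by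
    have hr : y.right = x.right := h.symm
    ext
    · exact congrArg Multiplicative.toAdd (mul_comm x.left y.left)
    · exact hr.symm
  add_neg x h := by
    ext
    · show x.left * x.left⁻¹ = (SemidirectProduct.inr (φ := phiAut M) (SemidirectProduct.rightHom x)).left
      simp
    · show x.right = (SemidirectProduct.inr (φ := phiAut M) (SemidirectProduct.rightHom x)).right
      simp

end Sdp
end BeckModule
namespace BeckModule
section SdpMap
variable {M N : Type u} [AddCommGroup M] [Module (MonoidAlgebra ℤ G) M]
  [AddCommGroup N] [Module (MonoidAlgebra ℤ G) N]

/-- Morphism of split extensions induced by a linear map. -/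
noncomputable def sdpHom (f : M →ₗ[MonoidAlgebra ℤ G] N) : (sdpObj (G := G) M).Hom (sdpObj (G := G) N) where
  toHom := SemidirectProduct.map (AddMonoidHom.toMultiplicative f.toAddMonoidHom)
    (MonoidHom.id G) (fun g => by
      refine MonoidHom.ext fun m => ?_
      show Multiplicative.ofAdd (f ((MonoidAlgebra.single g (1 : ℤ)) • m.toAdd)) =
        Multiplicative.ofAdd ((MonoidAlgebra.single g (1 : ℤ)) • f m.toAdd)
      rw [map_smul])
  p_comm x := rfl
  map_add x y h h' := by
    refine SemidirectProduct.ext ?_ ?_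
    · show f (x.left.toAdd + y.left.toAdd) = f x.left.toAdd + f y.left.toAdd
      rw [map_add]
    · rfl

end SdpMap

/-- The inverse functor: split extensions. -/
noncomputable def sdpFunctor : ModuleCat (MonoidAlgebra ℤ G) ⥤ BeckModule G where
  obj M := sdpObj (G := G) M
  map f := sdpHom f.hom
  map_id M := by
    refine Hom.ext ?_
    refine MonoidHom.ext fun x => ?_
    exact SemidirectProduct.ext rfl rfl
  map_comp f g := by
    refine Hom.ext ?_
    refine MonoidHom.ext fun x => ?_
    exact SemidirectProduct.ext rfl rfl

end BeckModule
namespace BeckModule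
open SemidirectProduct
section Counit
variable (M : Type u) [AddCommGroup M] [Module (MonoidAlgebra ℤ G) M]

lemma sdp_mem_ker {x : (sdpObj (G := G) M).E} :
    x ∈ MonoidHom.ker (sdpObj (G := G) M).p ↔ x.right = 1 := Iff.rfl

/-- The kernel of the split extension is `M`. -/
noncomputable def counitAddEquiv :
    Additive (MonoidHom.ker (sdpObj (G := G) M).p) ≃+ M where
  toFun k := Multiplicative.toAdd (k.toMul : (sdpObj (G := G) M).E).left
  invFun m := Additive.ofMul
    ⟨SemidirectProduct.inl (Multiplicative.ofAdd m), (sdp_mem_ker (G := G) M).mpr (SemidirectProduct.right_inl _)⟩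
  left_inv k := by
    refine congrArg Additive.ofMul (Subtype.ext ?_)
    refine SemidirectProduct.ext ?_ ?_
    · rfl
    · exact ((sdp_mem_ker M).mp (k.toMul).2).symm
  right_inv m := rfl
  map_add' k k' := by
    have hk : (k.toMul : (sdpObj (G := G) M).E).right = 1 := (sdp_mem_ker M).mp (k.toMul).2
    show Multiplicative.toAdd (((k.toMul : (sdpObj (G := G) M).E) *
      (k'.toMul : (sdpObj (G := G) M).E)).left) = _
    rw [show ((k.toMul : (sdpObj (G := G) M).E) * (k'.toMul : (sdpObj (G := G) M).E)).left =
      (k.toMul : (sdpObj (G := G) M).E).left * phiAut M (k.toMul : (sdpObj (G := G) M).E).right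
        (k'.toMul : (sdpObj (G := G) M).E).left from rfl, hk, map_one]
    rfl

lemma sdp_conj_left (g : G) (x : Multiplicative M ⋊[phiAut M] G) :
    (inr (φ := phiAut M) g * x * (inr (φ := phiAut M) g)⁻¹).left = phiAut M g x.left := by
  simp

lemma sdpObj_conj_left (g : G) (x : (sdpObj (G := G) M).E) :
    ((sdpObj (G := G) M).zero g * x * ((sdpObj (G := G) M).zero g)⁻¹).left = phiAut M g x.left :=
  sdp_conj_left M g x

lemma counitAddEquiv_equivariant (g : G) (k : Additive (MonoidHom.ker (sdpObj (G := G) M).p)) :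
    counitAddEquiv M ((MonoidAlgebra.single g (1 : ℤ)) • k) =
      (MonoidAlgebra.single g (1 : ℤ)) • counitAddEquiv M k := by
  rw [single_smul]
  show Multiplicative.toAdd (((sdpObj (G := G) M).zero g * (k.toMul : (sdpObj (G := G) M).E) *
    ((sdpObj (G := G) M).zero g)⁻¹).left) = _
  rw [sdpObj_conj_left]
  rfl

/-- The counit as a linear equivalence. -/
noncomputable def counitLinearEquiv :
    Additive (MonoidHom.ker (sdpObj (G := G) M).p) ≃ₗ[MonoidAlgebra ℤ G] M :=
  { counitAddEquiv M with
    map_smul' := fun a k => linear_of_equivariant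
      (counitAddEquiv M).toAddMonoidHom (counitAddEquiv_equivariant M) a k }

end Counit
end BeckModule
namespace BeckModule
open SemidirectProduct
section Unit
variable (X : BeckModule G)

/-- The kernel part of an element. -/
def kpart (x : X.E) : MonoidHom.ker X.p :=
  ⟨x * (X.zero (X.p x))⁻¹, by rw [MonoidHom.mem_ker]; simp [X.p_zero]⟩

local notation "K" => Additive (MonoidHom.ker X.p)

lemma coe_phiAut (g : G) (m : Multiplicative K) :
    ((Additive.toMul (Multiplicative.toAdd (phiAut (G := G) K g m)) : MonoidHom.ker X.p) : X.E) =
      X.zero g * ((Additive.toMul (Multiplicative.toAdd m) : MonoidHom.ker X.p) : X.E) *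
        (X.zero g)⁻¹ := by
  rw [phiAut_apply, single_smul]
  rfl

/-- The splitting `E ≅ K ⋊ G` (forward direction). -/
noncomputable def unitToFun : X.E →* Multiplicative K ⋊[phiAut (G := G) K] G where
  toFun x := ⟨Multiplicative.ofAdd (Additive.ofMul (kpart X x)), X.p x⟩
  map_one' := by
    refine SemidirectProduct.ext ?_ ?_
    · refine congrArg (fun k => Multiplicative.ofAdd (Additive.ofMul k)) (Subtype.ext ?_)
      show (1 : X.E) * (X.zero (X.p 1))⁻¹ = 1
      simp [p_one, zero_one]
    · exact p_one X
  map_mul' x y := by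
    refine SemidirectProduct.ext ?_ (map_mul X.p x y)
    show Multiplicative.ofAdd (Additive.ofMul (kpart X (x * y))) =
      Multiplicative.ofAdd (Additive.ofMul (kpart X x)) *
        phiAut (G := G) K (X.p x) (Multiplicative.ofAdd (Additive.ofMul (kpart X y)))
    have h1 : phiAut (G := G) K (X.p x) (Multiplicative.ofAdd (Additive.ofMul (kpart X y))) =
        Multiplicative.ofAdd (Additive.ofMul ((conjHom X (X.p x)) (kpart X y))) := by
      rw [phiAut_apply]
      exact congrArg Multiplicative.ofAdd (single_smul X (X.p x) (Additive.ofMul (kpart X y)))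
    rw [h1]
    show Multiplicative.ofAdd (Additive.ofMul (kpart X (x * y))) =
      Multiplicative.ofAdd (Additive.ofMul (kpart X x * (conjHom X (X.p x)) (kpart X y)))
    refine congrArg (fun k => Multiplicative.ofAdd (Additive.ofMul k)) (Subtype.ext ?_)
    show x * y * (X.zero (X.p (x * y)))⁻¹ =
      (x * (X.zero (X.p x))⁻¹) *
        (X.zero (X.p x) * (y * (X.zero (X.p y))⁻¹) * (X.zero (X.p x))⁻¹)
    rw [map_mul X.p x y, map_mul X.zero]
    group

/-- The splitting (backward direction). -/
noncomputable def unitInvFun : Multiplicative K ⋊[phiAut (G := G) K] G →* X.E where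
  toFun a := ((Additive.toMul (Multiplicative.toAdd a.left) : MonoidHom.ker X.p) : X.E) *
    X.zero a.right
  map_one' := by
    show ((Additive.toMul (Multiplicative.toAdd
      ((1 : Multiplicative K ⋊[phiAut (G := G) K] G).left)) : MonoidHom.ker X.p) : X.E) *
      X.zero (1 : Multiplicative K ⋊[phiAut (G := G) K] G).right = 1
    simp only [SemidirectProduct.one_left, SemidirectProduct.one_right, zero_one]
    show ((1 : MonoidHom.ker X.p) : X.E) * 1 = 1
    simp
  map_mul' a b := by
    simp only [SemidirectProduct.mul_left, SemidirectProduct.mul_right]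
    have hmul : ((Additive.toMul (Multiplicative.toAdd
        (a.left * phiAut (G := G) K a.right b.left)) : MonoidHom.ker X.p) : X.E) =
        ((Additive.toMul (Multiplicative.toAdd a.left) : MonoidHom.ker X.p) : X.E) *
        ((Additive.toMul (Multiplicative.toAdd
          (phiAut (G := G) K a.right b.left)) : MonoidHom.ker X.p) : X.E) := rfl
    rw [hmul, coe_phiAut, map_mul X.zero]
    group

lemma unitInv_unitTo (x : X.E) : unitInvFun X (unitToFun X x) = x := by
  show (kpart X x : X.E) * X.zero (X.p x) = x
  show x * (X.zero (X.p x))⁻¹ * X.zero (X.p x) = x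
  group

lemma unitTo_unitInv (a : Multiplicative K ⋊[phiAut (G := G) K] G) :
    unitToFun X (unitInvFun X a) = a := by
  have hp : X.p (unitInvFun X a) = a.right := by
    show X.p (((Additive.toMul (Multiplicative.toAdd a.left) : MonoidHom.ker X.p) : X.E) *
      X.zero a.right) = a.right
    rw [map_mul, (Additive.toMul (Multiplicative.toAdd a.left) : MonoidHom.ker X.p).2,
      one_mul, X.p_zero]
  refine SemidirectProduct.ext ?_ hp
  refine congrArg (fun k => Multiplicative.ofAdd (Additive.ofMul k)) (Subtype.ext ?_)
  show unitInvFun X a * (X.zero (X.p (unitInvFun X a)))⁻¹ =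
    ((Additive.toMul (Multiplicative.toAdd a.left) : MonoidHom.ker X.p) : X.E)
  rw [hp]
  show ((Additive.toMul (Multiplicative.toAdd a.left) : MonoidHom.ker X.p) : X.E) *
    X.zero a.right * (X.zero a.right)⁻¹ = _
  group

end Unit
end BeckModule
namespace BeckModule
open SemidirectProduct
section UnitHom
variable (X : BeckModule G)

lemma unitInvFun_p (a : Multiplicative (Additive (MonoidHom.ker X.p))
    ⋊[phiAut (G := G) (Additive (MonoidHom.ker X.p))] G) :
    X.p (unitInvFun X a) = a.right := by
  show X.p (((Additive.toMul (Multiplicative.toAdd a.left) : MonoidHom.ker X.p) : X.E) *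
    X.zero a.right) = a.right
  rw [map_mul, (Additive.toMul (Multiplicative.toAdd a.left) : MonoidHom.ker X.p).2,
    one_mul, X.p_zero]

/-- The unit as a morphism of Beck modules. -/
noncomputable def unitHom : X.Hom (sdpObj (G := G) (Additive (MonoidHom.ker X.p))) where
  toHom := unitToFun X
  p_comm x := rfl
  map_add x y h h' := by
    refine SemidirectProduct.ext ?_ (X.p_add x y h)
    show Multiplicative.ofAdd (Additive.ofMul (kpart X (X.add x y h))) =
      Multiplicative.ofAdd (Additive.ofMul (kpart X x * kpart X y))
    refine congrArg (fun k => Multiplicative.ofAdd (Additive.ofMul k)) (Subtype.ext ?_)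
    show X.add x y h * (X.zero (X.p (X.add x y h)))⁻¹ =
      (x * (X.zero (X.p x))⁻¹) * (y * (X.zero (X.p y))⁻¹)
    rw [X.p_add, add_eq X h, ← h]
    group

lemma unitInvFun_add (a b : Multiplicative (Additive (MonoidHom.ker X.p))
      ⋊[phiAut (G := G) (Additive (MonoidHom.ker X.p))] G)
    (h : (sdpObj (G := G) (Additive (MonoidHom.ker X.p))).p a =
      (sdpObj (G := G) (Additive (MonoidHom.ker X.p))).p b)
    (h2 : X.p (unitInvFun X a) = X.p (unitInvFun X b)) :
    unitInvFun X ((sdpObj (G := G) (Additive (MonoidHom.ker X.p))).add a b h) =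
      X.add (unitInvFun X a) (unitInvFun X b) h2 := by
  have hr : b.right = a.right := h.symm
  rw [add_eq X h2, unitInvFun_p X a]
  show ((Additive.toMul (Multiplicative.toAdd (a.left * b.left)) : MonoidHom.ker X.p) : X.E) *
    X.zero a.right = _
  have hmul : ((Additive.toMul (Multiplicative.toAdd (a.left * b.left)) :
      MonoidHom.ker X.p) : X.E) =
      ((Additive.toMul (Multiplicative.toAdd a.left) : MonoidHom.ker X.p) : X.E) *
      ((Additive.toMul (Multiplicative.toAdd b.left) : MonoidHom.ker X.p) : X.E) := rfl
  rw [hmul]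
  show _ = unitInvFun X a * (X.zero a.right)⁻¹ * (unitInvFun X b * (X.zero a.right)⁻¹) *
    X.zero a.right
  show _ = ((Additive.toMul (Multiplicative.toAdd a.left) : MonoidHom.ker X.p) : X.E) *
      X.zero a.right * (X.zero a.right)⁻¹ *
    (((Additive.toMul (Multiplicative.toAdd b.left) : MonoidHom.ker X.p) : X.E) *
      X.zero b.right * (X.zero a.right)⁻¹) * X.zero a.right
  rw [hr]
  group

/-- The inverse of the unit as a morphism of Beck modules. -/
noncomputable def unitInvHom : (sdpObj (G := G) (Additive (MonoidHom.ker X.p))).Hom X where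
  toHom := unitInvFun X
  p_comm a := unitInvFun_p X a
  map_add a b h h' := unitInvFun_add X a b h h' 

end UnitHom

lemma unit_natural {X Y : BeckModule G} (f : X.Hom Y) (x : X.E) :
    unitToFun Y (f.toHom x) =
      (sdpHom (G := G) (kerFunctor.map (X := X) (Y := Y) f).hom).toHom (unitToFun X x) := by
  refine SemidirectProduct.ext ?_ (f.p_comm x)
  show Multiplicative.ofAdd (Additive.ofMul (kpart Y (f.toHom x))) =
    Multiplicative.ofAdd (Additive.ofMul (kerHom f (kpart X x)))
  refine congrArg (fun k => Multiplicative.ofAdd (Additive.ofMul k)) (Subtype.ext ?_)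
  show f.toHom x * (Y.zero (Y.p (f.toHom x)))⁻¹ = f.toHom (x * (X.zero (X.p x))⁻¹)
  rw [map_mul, map_inv, hom_zero f, f.p_comm]

/-- The unit isomorphism. -/
noncomputable def unitIso : 𝟭 (BeckModule G) ≅ kerFunctor ⋙ sdpFunctor :=
  NatIso.ofComponents
    (fun X =>
      { hom := unitHom X
        inv := unitInvHom X
        hom_inv_id := Hom.ext (MonoidHom.ext fun x => unitInv_unitTo X x)
        inv_hom_id := Hom.ext (MonoidHom.ext fun a => unitTo_unitInv X a) })
    (fun {X Y} f => Hom.ext (MonoidHom.ext fun x => unit_natural f x))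

/-- The counit isomorphism. -/
noncomputable def counitIso :
    sdpFunctor (G := G) ⋙ kerFunctor ≅ 𝟭 (ModuleCat (MonoidAlgebra ℤ G)) :=
  NatIso.ofComponents
    (fun M =>
      { hom := ModuleCat.ofHom (counitLinearEquiv (G := G) M).toLinearMap
        inv := ModuleCat.ofHom (counitLinearEquiv (G := G) M).symm.toLinearMap
        hom_inv_id := ModuleCat.hom_ext (LinearMap.ext fun k => (counitLinearEquiv (G := G) M).symm_apply_apply k)
        inv_hom_id := ModuleCat.hom_ext (LinearMap.ext fun m => (counitLinearEquiv (G := G) M).apply_symm_apply m) })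
    (fun {M N} f => ModuleCat.hom_ext (LinearMap.ext fun k => rfl))

/-- Beck's equivalence. -/
noncomputable def beckEquivalence :
    BeckModule G ≌ ModuleCat (MonoidAlgebra ℤ G) :=
  CategoryTheory.Equivalence.mk kerFunctor sdpFunctor unitIso counitIso

end BeckModule
namespace BeckModule
open SemidirectProduct

lemma final1 (X : BeckModule G) (g : G) (m : Additive (MonoidHom.ker X.p)) :
    ((Additive.toMul ((MonoidAlgebra.single g (1 : ℤ)) • m) : MonoidHom.ker X.p) : X.E) =
      X.zero g * ((Additive.toMul m : MonoidHom.ker X.p) : X.E) * (X.zero g)⁻¹ := by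
  rw [single_smul]
  rfl

lemma final2 (M : Type u) [AddCommGroup M] [Module (MonoidAlgebra ℤ G) M] (g : G) (m : M) :
    (inl (Multiplicative.ofAdd ((MonoidAlgebra.single g (1 : ℤ)) • m)) :
        Multiplicative M ⋊[phiAut (G := G) M] G) =
      inr (φ := phiAut (G := G) M) g * inl (Multiplicative.ofAdd m) *
        (inr (φ := phiAut (G := G) M) g)⁻¹ := by
  rw [← map_inv, ← SemidirectProduct.inl_aut]
  rfl

end BeckModule

/-- Beck's theorem for groups: the category of abelian group objects in `Grp/G` is
equivalent to the category of left `ℤ[G]`-modules.  The forward functor sends an abelian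
group object `p : E → G` to the kernel of `p`, with `G` acting by conjugation (through the
unit section); the inverse sends a `G`-module `M` to the split extension `M ⋊ G → G`,
whose kernel recovers `M`. -/
theorem beckModule_equivalence_modules (G : Type) [Group G] :
    ∃ e : BeckModule G ≌ ModuleCat (MonoidAlgebra ℤ G),
      (∀ X : BeckModule G,
        ∃ φ : (e.functor.obj X : Type) ≃+ Additive (MonoidHom.ker X.p),
          ∀ (g : G) (m : (e.functor.obj X : Type)),
            ((Additive.toMul (φ ((MonoidAlgebra.single g (1 : ℤ)) • m)) : MonoidHom.ker X.p) : X.E) =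
              X.zero g * ((Additive.toMul (φ m) : MonoidHom.ker X.p) : X.E) * (X.zero g)⁻¹) ∧
      (∀ M : ModuleCat (MonoidAlgebra ℤ G),
        ∃ ψ : (M : Type) ≃+ Additive (MonoidHom.ker (e.inverse.obj M).p),
          ∀ (g : G) (m : (M : Type)),
            ((Additive.toMul (ψ ((MonoidAlgebra.single g (1 : ℤ)) • m)) : MonoidHom.ker (e.inverse.obj M).p) : (e.inverse.obj M).E) =
              (e.inverse.obj M).zero g * ((Additive.toMul (ψ m) : MonoidHom.ker (e.inverse.obj M).p) : (e.inverse.obj M).E) *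
                ((e.inverse.obj M).zero g)⁻¹) := by
  refine ⟨BeckModule.beckEquivalence (G := G), ?_, ?_⟩
  · intro X
    exact ⟨AddEquiv.refl _, fun g m => BeckModule.final1 X g m⟩
  · intro M
    exact ⟨(BeckModule.counitAddEquiv (G := G) (M : Type)).symm,
      fun g m => BeckModule.final2 (G := G) (M : Type) g m⟩
end

section
/- For an abelian group A, the category of abelian group objects in the slice category Ab/A is equivalent to the category Ab of abelian groups, via the functors sending M to the projection A ⊕ M → A and sending an abelian group object p : E → A to ker(p). -/
open CategoryTheory

universe u

/-- An abelian group object in the slice category `Ab/A`: a homomorphism of abelian groups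
`p : E →+ A` together with a unit section `zero`, a fiberwise addition `badd` defined on
pairs with `p x = p y`, and fiberwise negation `bneg`, all homomorphisms over `A`,
satisfying the abelian group axioms. -/
structure BeckModuleAb (A : Type u) [AddCommGroup A] : Type (u + 1) where
  E : Type u
  [acg : AddCommGroup E]
  p : E →+ A
  zero : A →+ E
  bneg : E →+ E
  badd : ∀ x y : E, p x = p y → E
  p_zero : ∀ a, p (zero a) = a
  p_bneg : ∀ x, p (bneg x) = p x
  p_badd : ∀ x y h, p (badd x y h) = p x
  /-- `badd` is additive on the fiber product. -/
  badd_add : ∀ x y x' y' (h : p x = p y) (h' : p x' = p y') (h'' : p (x + x') = p (y + y')),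
    badd (x + x') (y + y') h'' = badd x y h + badd x' y' h'
  zero_badd : ∀ x (h : p (zero (p x)) = p x), badd (zero (p x)) x h = x
  badd_assoc : ∀ x y z (hxy : p x = p y) (hyz : p y = p z) (h1 : p (badd x y hxy) = p z)
    (h2 : p x = p (badd y z hyz)), badd (badd x y hxy) z h1 = badd x (badd y z hyz) h2
  badd_comm : ∀ x y (h : p x = p y) (h' : p y = p x), badd x y h = badd y x h'
  badd_bneg : ∀ x (h : p x = p (bneg x)), badd x (bneg x) h = zero (p x)

attribute [instance] BeckModuleAb.acg

variable {A : Type u} [AddCommGroup A]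

/-- Morphisms of abelian group objects in `Ab/A`. -/
@[ext]
structure BeckModuleAb.Hom (X Y : BeckModuleAb A) where
  toHom : X.E →+ Y.E
  p_comm : ∀ x, Y.p (toHom x) = X.p x
  map_badd : ∀ x y (h : X.p x = X.p y) (h' : Y.p (toHom x) = Y.p (toHom y)),
    toHom (X.badd x y h) = Y.badd (toHom x) (toHom y) h'

instance : Category (BeckModuleAb A) where
  Hom X Y := BeckModuleAb.Hom X Y
  id X := ⟨AddMonoidHom.id _, fun _ => rfl, fun _ _ _ _ => rfl⟩
  comp {X Y Z} f g := ⟨g.toHom.comp f.toHom,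
    fun x => by simp [g.p_comm, f.p_comm],
    fun x y h h' => by
      simp only [AddMonoidHom.coe_comp, Function.comp_apply]
      rw [f.map_badd x y h (by rw [f.p_comm, f.p_comm]; exact h), g.map_badd]⟩
  id_comp f := BeckModuleAb.Hom.ext rfl
  comp_id f := BeckModuleAb.Hom.ext rfl
  assoc f g h := BeckModuleAb.Hom.ext rfl

namespace BeckModuleAb

variable (X : BeckModuleAb A)

lemma badd_congr {x x' y y' : X.E} (hx : x = x') (hy : y = y')
    (h : X.p x = X.p y) (h' : X.p x' = X.p y') : X.badd x y h = X.badd x' y' h' := by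
  subst hx; subst hy; rfl

lemma badd_zero_zero (a : A) (h : X.p (X.zero a) = X.p (X.zero a)) :
    X.badd (X.zero a) (X.zero a) h = X.zero a :=
  (X.badd_congr (show X.zero a = X.zero (X.p (X.zero a)) by rw [X.p_zero]) rfl _
    (by rw [X.p_zero])).trans (X.zero_badd (X.zero a) (by rw [X.p_zero]))

lemma badd_ker (x₀ y₀ : X.E) (hx : X.p x₀ = 0) (hy : X.p y₀ = 0)
    (h₀ : X.p x₀ = X.p y₀) : X.badd x₀ y₀ h₀ = x₀ + y₀ := by
  have e1 : X.badd (0 : X.E) y₀ (by rw [map_zero, hy]) = y₀ :=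
    (X.badd_congr (show (0 : X.E) = X.zero (X.p y₀) by rw [hy, map_zero]) rfl _
      (by rw [X.p_zero])).trans (X.zero_badd y₀ (by rw [X.p_zero]))
  have e2 : X.badd x₀ (0 : X.E) (by rw [map_zero, hx]) = x₀ := by
    rw [X.badd_comm x₀ 0 _ (by rw [map_zero, hx])]
    exact (X.badd_congr (show (0 : X.E) = X.zero (X.p x₀) by rw [hx, map_zero]) rfl _
      (by rw [X.p_zero])).trans (X.zero_badd x₀ (by rw [X.p_zero]))
  calc X.badd x₀ y₀ h₀ = X.badd (0 + x₀) (y₀ + 0) (by simpa using h₀) :=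
        X.badd_congr (by rw [zero_add]) (by rw [add_zero]) _ _
    _ = X.badd 0 y₀ (by rw [map_zero, hy]) + X.badd x₀ 0 (by rw [map_zero, hx]) :=
        X.badd_add _ _ _ _ _ _ _
    _ = y₀ + x₀ := by rw [e1, e2]
    _ = x₀ + y₀ := add_comm _ _

lemma badd_eq (x y : X.E) (h : X.p x = X.p y) :
    X.badd x y h = x + y - X.zero (X.p x) := by
  have hx0 : X.p (x - X.zero (X.p x)) = 0 := by simp [X.p_zero]
  have hy0 : X.p (y - X.zero (X.p x)) = 0 := by simp [X.p_zero, ← h]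
  have hz : X.p (X.zero (X.p x)) = X.p (X.zero (X.p x)) := rfl
  calc X.badd x y h
      = X.badd (X.zero (X.p x) + (x - X.zero (X.p x)))
          (X.zero (X.p x) + (y - X.zero (X.p x)))
          (by simp [X.p_zero, h]) :=
        X.badd_congr (by abel) (by abel) _ _
    _ = X.badd (X.zero (X.p x)) (X.zero (X.p x)) hz
        + X.badd (x - X.zero (X.p x)) (y - X.zero (X.p x)) (by rw [hx0, hy0]) :=
        X.badd_add _ _ _ _ _ _ _
    _ = X.zero (X.p x) + ((x - X.zero (X.p x)) + (y - X.zero (X.p x))) := by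
        rw [X.badd_zero_zero, X.badd_ker _ _ hx0 hy0]
    _ = x + y - X.zero (X.p x) := by abel

lemma hom_zero {X Y : BeckModuleAb A} (f : X.Hom Y) (a : A) :
    f.toHom (X.zero a) = Y.zero a := by
  have hz : X.p (X.zero a) = X.p (X.zero a) := rfl
  have h1 := f.map_badd (X.zero a) (X.zero a) hz (by rw [f.p_comm])
  rw [X.badd_zero_zero, Y.badd_eq] at h1
  have hpa : Y.p (f.toHom (X.zero a)) = a := by rw [f.p_comm, X.p_zero]
  rw [hpa] at h1
  rw [eq_sub_iff_add_eq] at h1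
  exact (add_left_cancel h1).symm

end BeckModuleAb

/-- The kernel functor. -/
def kerFun : BeckModuleAb A ⥤ AddCommGrpCat.{u} where
  obj X := AddCommGrpCat.of (AddMonoidHom.ker X.p)
  map {X Y} f := AddCommGrpCat.ofHom <|
    AddMonoidHom.codRestrict (f.toHom.comp (AddMonoidHom.ker X.p).subtype) _
      (fun k => by
        simp only [AddMonoidHom.mem_ker, AddMonoidHom.coe_comp, Function.comp_apply,
          AddSubgroup.coe_subtype]
        rw [f.p_comm]
        exact k.2)
  map_id X := by ext k; rfl
  map_comp f g := by ext k; rfl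

/-- The product functor. -/
def prodFun : AddCommGrpCat.{u} ⥤ BeckModuleAb A where
  obj M :=
    { E := A × M
      p := AddMonoidHom.fst A M
      zero := AddMonoidHom.inl A M
      bneg := (AddMonoidHom.id A).prodMap negAddMonoidHom
      badd := fun x y _ => (x.1, x.2 + y.2)
      p_zero := fun a => rfl
      p_bneg := fun x => rfl
      p_badd := fun x y h => rfl
      badd_add := fun x y x' y' h h' h'' =>
        Prod.ext rfl (by simp only [Prod.snd_add]; abel)
      zero_badd := fun x h => Prod.ext rfl (zero_add _)
      badd_assoc := fun x y z hxy hyz h1 h2 => Prod.ext rfl (add_assoc _ _ _)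
      badd_comm := fun x y h h' => Prod.ext h (add_comm _ _)
      badd_bneg := fun x h => Prod.ext rfl (by
        show x.2 + negAddMonoidHom x.2 = 0
        simp [negAddMonoidHom]) }
  map {M N} f :=
    { toHom :=
        { toFun := fun x => (x.1, f x.2)
          map_zero' := by simp
          map_add' := fun x y => by simp [Prod.ext_iff] }
      p_comm := fun x => rfl
      map_badd := fun x y h h' => Prod.ext rfl (by
        show f (x.2 + y.2) = f x.2 + f y.2
        simp) }
  map_id M := by
    apply BeckModuleAb.Hom.ext
    ext x <;> rfl
  map_comp f g := by
    apply BeckModuleAb.Hom.ext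
    ext x <;> rfl

/-- The unit morphism. -/
def unitHom (X : BeckModuleAb A) : X ⟶ (kerFun ⋙ prodFun).obj X where
  toHom :=
    { toFun := fun x => ((X.p x, ⟨x - X.zero (X.p x), by simp [AddMonoidHom.mem_ker, X.p_zero]⟩) :
        A × AddMonoidHom.ker X.p)
      map_zero' := Prod.ext (by simp; rfl) (Subtype.ext (by simp; rfl))
      map_add' := fun x y =>
        Prod.ext (map_add X.p x y) (Subtype.ext (by
          show x + y - X.zero (X.p (x + y))
            = (x - X.zero (X.p x)) + (y - X.zero (X.p y))
          rw [map_add, map_add]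
          abel)) }
  p_comm := fun x => rfl
  map_badd := fun x y h h' =>
    Prod.ext (X.p_badd x y h) (Subtype.ext (by
      show X.badd x y h - X.zero (X.p (X.badd x y h))
          = (x - X.zero (X.p x)) + (y - X.zero (X.p y))
      rw [X.p_badd, X.badd_eq, ← h]
      abel))

/-- The inverse of the unit morphism. -/
def unitInv (X : BeckModuleAb A) : (kerFun ⋙ prodFun).obj X ⟶ X where
  toHom :=
    { toFun := fun x : A × AddMonoidHom.ker X.p => X.zero x.1 + x.2.1
      map_zero' := by
        show X.zero (0 : A) + ((0 : AddMonoidHom.ker X.p) : X.E) = 0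
        simp
      map_add' := fun x y => by
        show X.zero (x.1 + y.1) + (x.2.1 + y.2.1) = _
        rw [map_add]
        abel }
  p_comm := fun x => by
    show X.p (X.zero x.1 + x.2.1) = x.1
    have hk : X.p x.2.1 = 0 := x.2.2
    rw [map_add, X.p_zero, hk, add_zero]
  map_badd := fun x y h h' => by
    have hk : X.p x.2.1 = 0 := x.2.2
    have h1 : x.1 = y.1 := h
    show X.zero x.1 + (x.2.1 + y.2.1)
        = X.badd (X.zero x.1 + x.2.1) (X.zero y.1 + y.2.1) h'
    rw [X.badd_eq, map_add, X.p_zero, hk, add_zero, ← h1]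
    abel

lemma unit_hom_inv (X : BeckModuleAb A) : unitHom X ≫ unitInv X = 𝟙 X := by
  apply BeckModuleAb.Hom.ext
  ext x
  show X.zero (X.p x) + (x - X.zero (X.p x)) = x
  abel

lemma unit_inv_hom (X : BeckModuleAb A) : unitInv X ≫ unitHom X = 𝟙 _ := by
  apply BeckModuleAb.Hom.ext
  ext (x : A × AddMonoidHom.ker X.p)
  have hk : X.p x.2.1 = 0 := x.2.2
  refine Prod.ext ?_ (Subtype.ext ?_)
  · show X.p (X.zero x.1 + x.2.1) = x.1
    rw [map_add, X.p_zero, hk, add_zero]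
  · show X.zero x.1 + x.2.1 - X.zero (X.p (X.zero x.1 + x.2.1)) = x.2.1
    rw [map_add, X.p_zero, hk, add_zero]
    abel

/-- The unit isomorphism. -/
def unitIso : 𝟭 (BeckModuleAb A) ≅ kerFun ⋙ prodFun :=
  NatIso.ofComponents
    (fun X => ⟨unitHom X, unitInv X, unit_hom_inv X, unit_inv_hom X⟩)
    (fun {X Y} f => by
      apply BeckModuleAb.Hom.ext
      refine AddMonoidHom.ext fun (x : X.E) => ?_
      refine Prod.ext ?_ (Subtype.ext ?_)
      · exact f.p_comm x
      · show f.toHom x - Y.zero (Y.p (f.toHom x)) = f.toHom (x - X.zero (X.p x))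
        rw [map_sub, f.p_comm, BeckModuleAb.hom_zero f])

/-- The counit equivalence of groups. -/
def counitEquiv (M : AddCommGrpCat.{u}) :
    AddMonoidHom.ker (AddMonoidHom.fst A (M : Type u)) ≃+ (M : Type u) where
  toFun k := k.1.2
  invFun m := ⟨((0 : A), m), rfl⟩
  left_inv k := Subtype.ext (Prod.ext (k.2 : k.1.1 = 0).symm rfl)
  right_inv m := rfl
  map_add' x y := rfl

/-- The counit isomorphism. -/
def counitIso : prodFun (A := A) ⋙ kerFun ≅ 𝟭 (AddCommGrpCat.{u}) :=
  NatIso.ofComponents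
    (fun M => (counitEquiv (A := A) M).toAddCommGrpIso)
    (fun {M N} f => by
      ext (k : AddMonoidHom.ker (AddMonoidHom.fst A M))
      rfl)

/-- The category of abelian group objects in `Ab/A` is equivalent to `Ab`:
the forward functor sends an abelian group object `p : E →+ A` to `ker p`, and the inverse
sends an abelian group `M` to the projection `A ⊕ M → A`. -/
theorem beckModuleAb_equivalence_ab (A : Type) [AddCommGroup A] :
    ∃ e : BeckModuleAb A ≌ AddCommGrpCat,
      (∀ X : BeckModuleAb A,
        Nonempty ((e.functor.obj X : Type) ≃+ AddMonoidHom.ker X.p)) ∧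
      (∀ M : AddCommGrpCat,
        ∃ ψ : (e.inverse.obj M).E ≃+ A × (M : Type),
          ∀ x, (e.inverse.obj M).p x = (ψ x).1) := by
  refine ⟨CategoryTheory.Equivalence.mk kerFun prodFun unitIso counitIso,
    fun X => ⟨AddEquiv.refl _⟩, fun M => ⟨AddEquiv.refl _, fun x => rfl⟩⟩
end

section
/- Let ⋯ → X₂ → X₁ → X₀ be a tower of Kan fibrations between Kan complexes such that each map X_{k} → X_{k-1} is a weak equivalence for all k ≥ n (for some fixed n ≥ 1). Then the projection from the inverse limit, lim_k X_k → X_{n-1}, is a trivial fibration; in particular it is a weak equivalence. -/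
open CategoryTheory Limits Opposite
open scoped Simplicial

/-- A map of simplicial sets is a Kan fibration if it has the right lifting property
with respect to all horn inclusions. -/
def IsKanFibration {X Y : SSet} (f : X ⟶ Y) : Prop :=
  ∀ (n : ℕ) (i : Fin (n + 1)) (u : (Λ[n, i] : SSet) ⟶ X) (v : Δ[n] ⟶ Y),
    u ≫ f = Λ[n, i].ι ≫ v →
    ∃ w : Δ[n] ⟶ X, Λ[n, i].ι ≫ w = u ∧ w ≫ f = v

/-- A map of simplicial sets is a trivial fibration if it has the right lifting property
with respect to all boundary inclusions `∂Δ[n] ⟶ Δ[n]`.  (For a Kan fibration between Kan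
complexes this is equivalent to being a weak equivalence.) -/
def IsTrivialFibration {X Y : SSet} (f : X ⟶ Y) : Prop :=
  ∀ (n : ℕ) (u : (∂Δ[n] : SSet) ⟶ X) (v : Δ[n] ⟶ Y),
    u ≫ f = ∂Δ[n].ι ≫ v →
    ∃ w : Δ[n] ⟶ X, ∂Δ[n].ι ≫ w = u ∧ w ≫ f = v

/-- The Kan complex condition as `SSet.KanComplex` stated it in the older Mathlib:
horn filling for all `n : ℕ` and `i : Fin (n + 1)` (including `n = 0`). -/
def SSet.KanComplex' (S : SSet) : Prop :=
  ∀ ⦃n : ℕ⦄ ⦃i : Fin (n + 1)⦄ (σ₀ : (Λ[n, i] : SSet) ⟶ S),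
    ∃ σ : Δ[n] ⟶ S, σ₀ = Λ[n, i].ι ≫ σ

namespace TowerAux

variable (X : ℕ → SSet) (f : ∀ k, X (k + 1) ⟶ X k)

/-- The tower as a functor `ℕᵒᵖ ⥤ SSet`. -/
noncomputable abbrev F : ℕᵒᵖ ⥤ SSet := (Functor.ofSequence (fun k => (f k).op)).leftOp

lemma hom_eq {i j : ℕᵒᵖ} (g g' : i ⟶ j) : g = g' := by
  apply Quiver.Hom.unop_inj
  apply Subsingleton.elim

lemma F_map_succ (k : ℕ) :
    (F X f).map (homOfLE (Nat.le_add_right k 1)).op = f k := by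
  simp [F]
  rfl

section

variable (m : ℕ) (hweq : ∀ k, m ≤ k → IsTrivialFibration (f k))
  (d : ℕ) (u : (∂Δ[d] : SSet) ⟶ limit (F X f)) (v : Δ[d] ⟶ X m)
  (huv : u ≫ limit.π (F X f) (op m) = ∂Δ[d].ι ≫ v)

/-- The inductively constructed family of lifts. -/
noncomputable def W :
    ∀ k, {w : Δ[d] ⟶ X k // ∂Δ[d].ι ≫ w = u ≫ limit.π (F X f) (op k)} := fun k => match k with
  | 0 => ⟨v ≫ (F X f).map (homOfLE (Nat.zero_le m)).op, by
      erw [← Category.assoc, ← huv, Category.assoc, limit.w]; rfl⟩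
  | (k + 1) =>
    if h : m ≤ k then
      ⟨(hweq k h d (u ≫ limit.π (F X f) (op (k + 1))) (W k).1 (by
          erw [Category.assoc, ← F_map_succ X f k, limit.w, (W k).2]; rfl)).choose,
        (hweq k h d (u ≫ limit.π (F X f) (op (k + 1))) (W k).1 (by
          erw [Category.assoc, ← F_map_succ X f k, limit.w, (W k).2]; rfl)).choose_spec.1⟩
    else
      ⟨v ≫ (F X f).map (homOfLE (by omega : k + 1 ≤ m)).op, by
        erw [← Category.assoc, ← huv, Category.assoc, limit.w]; rfl⟩

lemma W_le : ∀ (k : ℕ) (hk : k ≤ m),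
    (W X f m hweq d u v huv k).1 = v ≫ (F X f).map (homOfLE hk).op := fun k hk => match k, hk with
  | 0, hk => by rw [W]; rfl
  | (k + 1), hk => by rw [W, dif_neg (by omega)]; rfl

lemma W_m : (W X f m hweq d u v huv m).1 = v := by
  rw [W_le X f m hweq d u v huv m le_rfl,
    show (homOfLE (le_refl m)).op = 𝟙 (op m) from hom_eq _ _,
    CategoryTheory.Functor.map_id]
  exact Category.comp_id _

lemma W_succ (k : ℕ) :
    (W X f m hweq d u v huv (k + 1)).1 ≫ f k = (W X f m hweq d u v huv k).1 := by
  rw [W]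
  split_ifs with h
  · exact (hweq k h d (u ≫ limit.π (F X f) (op (k + 1)))
      (W X f m hweq d u v huv k).1 (by
        erw [Category.assoc, ← F_map_succ X f k, limit.w,
          (W X f m hweq d u v huv k).2]; rfl)).choose_spec.2
  · erw [W_le X f m hweq d u v huv k (by omega), Category.assoc, ← F_map_succ X f k,
      ← Functor.map_comp]
    exact congrArg (fun g => v ≫ (F X f).map g) (hom_eq _ _)

lemma W_map : ∀ (i j : ℕ) (h : i ≤ j),
    (W X f m hweq d u v huv j).1 ≫ (F X f).map (homOfLE h).op
      = (W X f m hweq d u v huv i).1 := by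
  intro i j h
  induction j, h using Nat.le_induction with
  | base =>
    rw [show (homOfLE (le_refl i)).op = 𝟙 (op i) from hom_eq _ _,
      CategoryTheory.Functor.map_id]
    exact Category.comp_id _
  | succ j hj ih =>
    erw [show (homOfLE (by omega : i ≤ j + 1)).op
        = (homOfLE (Nat.le_add_right j 1)).op ≫ (homOfLE hj).op from hom_eq _ _,
      Functor.map_comp, ← Category.assoc, F_map_succ X f j,
      W_succ X f m hweq d u v huv j, ih]

end

lemma aux (m : ℕ) (hweq : ∀ k, m ≤ k → IsTrivialFibration (f k)) :
    IsTrivialFibration (limit.π (F X f) (op m)) := by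
  intro d u v huv
  let c : Cone (F X f) :=
    { pt := Δ[d]
      π :=
        { app := fun j => (W X f m hweq d u v huv j.unop).1
          naturality := by
            intro a b g
            simp only [Functor.const_obj_map, Category.id_comp]
            rw [show g = (homOfLE (leOfHom g.unop)).op from hom_eq _ _]
            exact (W_map X f m hweq d u v huv b.unop a.unop (leOfHom g.unop)).symm } }
  refine ⟨limit.lift (F X f) c, ?_, ?_⟩
  · apply limit.hom_ext
    intro j
    rw [Category.assoc, limit.lift_π]
    exact (W X f m hweq d u v huv j.unop).2
  · rw [limit.lift_π]
    exact W_m X f m hweq d u v huv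

end TowerAux

/-- Let `⋯ → X₂ → X₁ → X₀` be a tower of Kan fibrations between Kan complexes such that each
map `X_k → X_{k-1}` is a weak equivalence (equivalently, for these Kan fibrations: a trivial
fibration) for all `k ≥ n`.  Then the projection `lim_k X_k → X_{n-1}` from the inverse limit
is a trivial fibration; in particular it is a weak equivalence. -/
theorem tower_limit_projection_trivial_fibration
    (X : ℕ → SSet) (f : ∀ k, X (k + 1) ⟶ X k)
    (hKan : ∀ k, SSet.KanComplex' (X k))
    (hfib : ∀ k, IsKanFibration (f k))
    (n : ℕ) (hn : 1 ≤ n)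
    (hweq : ∀ k, n ≤ k + 1 → IsTrivialFibration (f k)) :
    IsTrivialFibration
      (limit.π (Functor.ofSequence (fun k => (f k).op)).leftOp (Opposite.op (n - 1))) := by
  exact TowerAux.aux X f (n - 1) (fun k hk => hweq k (by omega))
end
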